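/- Let N ≥ 1, let k and δ be real, and let Γ: ℝ → ℝ be continuous. Let C be the N×N real tridiagonal matrix with all diagonal entries −(1+k), all superdiagonal entries 1, and all subdiagonal entries k, and let Ω^δ ∈ ℝ^N be defined by Ω₁ = kΓ(δ), Ωᵢ = 0 for 2 ≤ i ≤ N−1, and Ω_N = Γ(δ). Let x: ℝ → ℝ^N be a differentiable solution of ẋ = Ω^δ + CΓ(x) (with Γ applied componentwise), and define E(x) = Σ_{i=1}^N ( ∫₀^{xᵢ} Γ(y) dy − Γ(δ)·xᵢ ). Then for every t, d/dt E(x(t)) = −((k+1)/2) · ( (Γ(x₁(t)) − Γ(δ))² + (Γ(x_N(t)) − Γ(δ))² + Σ_{i=1}^{N−1} (Γ(xᵢ(t)) − Γ(xᵢ₊₁(t)))² ). -/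

import Mathlib

open Matrix

/-- The Lyapunov-type functional `E(x) = Σᵢ (∫₀^{xᵢ} Γ(y) dy − Γ(δ)·xᵢ)`. -/
noncomputable def lyapunovE (N : ℕ) (Γ : ℝ → ℝ) (δ : ℝ) (v : Fin N → ℝ) : ℝ :=
  ∑ i, ((∫ y in (0:ℝ)..(v i), Γ y) - Γ δ * v i)

lemma sum_ite_nat {N : ℕ} (m : ℕ) (a : Fin N → ℝ) :
    (∑ j : Fin N, if (j : ℕ) = m then a j else 0)
      = if hm : m < N then a ⟨m, hm⟩ else 0 := by
  split_ifs with hm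
  · rw [Finset.sum_eq_single (⟨m, hm⟩ : Fin N)]
    · simp
    · intro j _ hj
      rw [if_neg]
      intro h; exact hj (Fin.ext h)
    · simp
  · apply Finset.sum_eq_zero
    intro j _
    rw [if_neg]
    intro h; exact hm (h ▸ j.isLt)

lemma key_sum (k : ℝ) (N : ℕ) (hN : 1 ≤ N) (h : ℕ → ℝ) :
    (∑ i ∈ Finset.range N, h i * (-(1 + k) * h i
        + (if i + 1 < N then h (i + 1) else 0)
        + (if 0 < i then k * h (i - 1) else 0)))
      = -((k + 1) / 2) * ((h 0) ^ 2 + (h (N - 1)) ^ 2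
        + ∑ i ∈ Finset.range (N - 1), (h i - h (i + 1)) ^ 2) := by
  obtain ⟨M, rfl⟩ : ∃ M, N = M + 1 := ⟨N - 1, by omega⟩
  simp only [Nat.add_sub_cancel]
  have p : ∀ i : ℕ, h i * (-(1 + k) * h i
        + (if i + 1 < M + 1 then h (i + 1) else 0)
        + (if 0 < i then k * h (i - 1) else 0))
      = -(1 + k) * h i ^ 2 + (if i + 1 < M + 1 then h i * h (i + 1) else 0)
        + k * (if 0 < i then h i * h (i - 1) else 0) := by
    intro i; split_ifs <;> ring
  rw [Finset.sum_congr rfl fun i _ => p i, Finset.sum_add_distrib,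
    Finset.sum_add_distrib, ← Finset.mul_sum, ← Finset.mul_sum]
  have e1 : (∑ i ∈ Finset.range (M + 1), if i + 1 < M + 1 then h i * h (i + 1) else 0)
      = ∑ i ∈ Finset.range M, h i * h (i + 1) := by
    rw [Finset.sum_range_succ, if_neg (by omega), add_zero]
    exact Finset.sum_congr rfl fun i hi => if_pos (by
      have := Finset.mem_range.mp hi; omega)
  have e2 : (∑ i ∈ Finset.range (M + 1), if 0 < i then h i * h (i - 1) else 0)
      = ∑ i ∈ Finset.range M, h i * h (i + 1) := by
    rw [Finset.sum_range_succ']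
    simp only [Nat.lt_irrefl, if_false, add_zero, Nat.succ_sub_one, Nat.succ_pos, if_true]
    exact Finset.sum_congr rfl fun i _ => mul_comm _ _
  rw [e1, e2]
  have e3 : (∑ i ∈ Finset.range M, (h i - h (i + 1)) ^ 2)
      = 2 * (∑ i ∈ Finset.range (M + 1), h i ^ 2) - h 0 ^ 2 - h M ^ 2
        - 2 * ∑ i ∈ Finset.range M, h i * h (i + 1) := by
    have q : ∀ i : ℕ, (h i - h (i + 1)) ^ 2
        = h i ^ 2 + h (i + 1) ^ 2 - 2 * (h i * h (i + 1)) := fun i => by ring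
    rw [Finset.sum_congr rfl fun i _ => q i, Finset.sum_sub_distrib,
      Finset.sum_add_distrib, ← Finset.mul_sum]
    have s1 := Finset.sum_range_succ (fun i => h i ^ 2) M
    have s2 := Finset.sum_range_succ' (fun i => h i ^ 2) M
    linarith
  rw [e3]; ring

/-- Along any solution of the phase-difference system
`ẋ = Ω^δ + CΓ(x)` with the traveling-wave frequency vector `Ω^δ`, the
Lyapunov functional `E` satisfies
`dE/dt = −((k+1)/2)((Γ(x₁)−Γ(δ))² + (Γ(x_N)−Γ(δ))² + Σ(Γ(xᵢ)−Γ(xᵢ₊₁))²)`. -/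
theorem energy_derivative (N : ℕ) (hN : 1 ≤ N) (k δ : ℝ) (Γ : ℝ → ℝ)
    (hΓ : Continuous Γ)
    (C : Matrix (Fin N) (Fin N) ℝ)
    (hC : ∀ i j : Fin N, C i j =
      if (i : ℕ) = (j : ℕ) then -(1 + k)
      else if (j : ℕ) = (i : ℕ) + 1 then 1
      else if (i : ℕ) = (j : ℕ) + 1 then k else 0)
    (Ω : Fin N → ℝ)
    (hΩ : ∀ i : Fin N, Ω i =
      (if (i : ℕ) = 0 then k * Γ δ else 0) + (if (i : ℕ) = N - 1 then Γ δ else 0))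
    (x : ℝ → Fin N → ℝ)
    (hx : ∀ (t : ℝ) (i : Fin N),
      HasDerivAt (fun s => x s i) (Ω i + (C *ᵥ fun j => Γ (x t j)) i) t) :
    ∀ t : ℝ,
      HasDerivAt (fun s => lyapunovE N Γ δ (x s))
        (-((k + 1) / 2) *
          ((Γ (x t ⟨0, hN⟩) - Γ δ) ^ 2 + (Γ (x t ⟨N - 1, by omega⟩) - Γ δ) ^ 2 +
            ∑ i : Fin (N - 1),
              (Γ (x t ⟨(i : ℕ), by have := i.isLt; omega⟩) -
               Γ (x t ⟨(i : ℕ) + 1, by have := i.isLt; omega⟩)) ^ 2)) t := by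
  intro t
  -- Step 1: the derivative of E along the solution
  have hd : ∀ i : Fin N,
      HasDerivAt (fun s => (∫ y in (0:ℝ)..(x s i), Γ y) - Γ δ * x s i)
        ((Γ (x t i) - Γ δ) * (Ω i + (C *ᵥ fun j => Γ (x t j)) i)) t := by
    intro i
    have h1 := ((hΓ.integral_hasStrictDerivAt 0 (x t i)).hasDerivAt).comp t (hx t i)
    have h2 := HasDerivAt.const_mul (Γ δ) (hx t i)
    have h3 := h1.sub h2
    exact h3.congr_deriv (by ring)
  have hD : HasDerivAt (fun s => lyapunovE N Γ δ (x s))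
      (∑ i, (Γ (x t i) - Γ δ) * (Ω i + (C *ᵥ fun j => Γ (x t j)) i)) t := by
    unfold lyapunovE
    exact HasDerivAt.fun_sum fun i _ => hd i
  -- Step 2: compute the matrix-vector product rowwise
  have hCi : ∀ i : Fin N, (C *ᵥ fun j => Γ (x t j)) i
      = -(1 + k) * Γ (x t i)
        + (if h1 : (i : ℕ) + 1 < N then Γ (x t ⟨(i : ℕ) + 1, h1⟩) else 0)
        + (if h2 : 0 < (i : ℕ) then k * Γ (x t ⟨(i : ℕ) - 1, by omega⟩) else 0) := by
    intro i
    have hpoint : ∀ j : Fin N, C i j * Γ (x t j)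
        = (if (j : ℕ) = (i : ℕ) then -(1 + k) * Γ (x t j) else 0)
          + (if (j : ℕ) = (i : ℕ) + 1 then Γ (x t j) else 0)
          + (if (i : ℕ) = (j : ℕ) + 1 then k * Γ (x t j) else 0) := by
      intro j
      rw [hC]
      split_ifs <;> first | (exfalso; omega) | ring
    show (∑ j, C i j * Γ (x t j)) = _
    rw [Finset.sum_congr rfl fun j _ => hpoint j, Finset.sum_add_distrib,
      Finset.sum_add_distrib]
    congr 1
    · congr 1
      · rw [sum_ite_nat ((i : ℕ)) (fun j => -(1 + k) * Γ (x t j)), dif_pos i.isLt]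
      · rw [sum_ite_nat ((i : ℕ) + 1) (fun j => Γ (x t j))]
    · by_cases h2 : 0 < (i : ℕ)
      · rw [dif_pos h2]
        have hc : ∀ j : Fin N, (if (i : ℕ) = (j : ℕ) + 1 then k * Γ (x t j) else 0)
            = (if (j : ℕ) = (i : ℕ) - 1 then k * Γ (x t j) else 0) :=
          fun j => if_congr (by omega) rfl rfl
        rw [Finset.sum_congr rfl fun j _ => hc j,
          sum_ite_nat ((i : ℕ) - 1) (fun j => k * Γ (x t j)),
          dif_pos (show (i : ℕ) - 1 < N by omega)]
      · rw [dif_neg h2]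
        apply Finset.sum_eq_zero
        intro j _
        rw [if_neg]
        omega
  -- Step 3: pass to the shifted variables h i = Γ(x i) − Γ(δ)
  set H : ℕ → ℝ := fun n => if hn : n < N then Γ (x t ⟨n, hn⟩) - Γ δ else 0 with hH
  have Hdef : ∀ (n : ℕ) (hn : n < N), H n = Γ (x t ⟨n, hn⟩) - Γ δ := fun n hn => dif_pos hn
  have hper : ∀ i : Fin N,
      (Γ (x t i) - Γ δ) * (Ω i + (C *ᵥ fun j => Γ (x t j)) i)
        = H (i : ℕ) * (-(1 + k) * H (i : ℕ)
            + (if (i : ℕ) + 1 < N then H ((i : ℕ) + 1) else 0)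
            + (if 0 < (i : ℕ) then k * H ((i : ℕ) - 1) else 0)) := by
    intro i
    rw [hΩ i, hCi i, Hdef (i : ℕ) i.isLt]
    simp only [Fin.eta]
    by_cases h1 : (i : ℕ) + 1 < N <;> by_cases h2 : 0 < (i : ℕ)
    · rw [dif_pos h1, dif_pos h2, if_pos h1, if_pos h2, if_neg (by omega), if_neg (by omega),
        Hdef _ h1, Hdef _ (show (i : ℕ) - 1 < N by omega)]
      ring
    · rw [dif_pos h1, dif_neg h2, if_pos h1, if_neg h2, if_pos (by omega), if_neg (by omega),
        Hdef _ h1]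
      ring
    · rw [dif_neg h1, dif_pos h2, if_neg h1, if_pos h2, if_neg (by omega),
        if_pos (show (i : ℕ) = N - 1 by have := i.isLt; omega),
        Hdef _ (show (i : ℕ) - 1 < N by omega)]
      ring
    · rw [dif_neg h1, dif_neg h2, if_neg h1, if_neg h2, if_pos (by omega),
        if_pos (show (i : ℕ) = N - 1 by have := i.isLt; omega)]
      ring
  have heq : (∑ i, (Γ (x t i) - Γ δ) * (Ω i + (C *ᵥ fun j => Γ (x t j)) i))
      = -((k + 1) / 2) *
          ((Γ (x t ⟨0, hN⟩) - Γ δ) ^ 2 + (Γ (x t ⟨N - 1, by omega⟩) - Γ δ) ^ 2 +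
            ∑ i : Fin (N - 1),
              (Γ (x t ⟨(i : ℕ), by have := i.isLt; omega⟩) -
               Γ (x t ⟨(i : ℕ) + 1, by have := i.isLt; omega⟩)) ^ 2) := by
    rw [Finset.sum_congr rfl fun i _ => hper i]
    rw [Fin.sum_univ_eq_sum_range (fun n => H n * (-(1 + k) * H n
        + (if n + 1 < N then H (n + 1) else 0)
        + (if 0 < n then k * H (n - 1) else 0))) N]
    rw [key_sum k N hN H]
    rw [Hdef 0 hN, Hdef (N - 1) (by omega)]
    rw [← Fin.sum_univ_eq_sum_range (fun n => (H n - H (n + 1)) ^ 2) (N - 1)]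
    have hsq : ∀ i : Fin (N - 1),
        (H (i : ℕ) - H ((i : ℕ) + 1)) ^ 2
          = (Γ (x t ⟨(i : ℕ), by have := i.isLt; omega⟩) -
             Γ (x t ⟨(i : ℕ) + 1, by have := i.isLt; omega⟩)) ^ 2 := by
      intro i
      rw [Hdef (i : ℕ) (by have := i.isLt; omega),
        Hdef ((i : ℕ) + 1) (by have := i.isLt; omega)]
      ring
    rw [Finset.sum_congr rfl fun i _ => hsq i]
  exact heq ▸ hD
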